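/- arXiv:1809.03017 — 2 statements merged into one kernel-verified Lean document; each statement's English description precedes it below -/
import Mathlib

section
/- Let e : A → X be bijective on objects and m : B → Y fully faithful, and suppose given functors v, v' : A → B and u, u' : X → Y with m ∘ v = u ∘ e and m ∘ v' = u' ∘ e, and let w, w' : X → B be the unique functors with w ∘ e = v, m ∘ w = u and w' ∘ e = v', m ∘ w' = u'. Given natural transformations σ : v ⟹ v' and τ : u ⟹ u' such that the whiskering of τ with e equals the whiskering of m with σ (i.e. τ_{e(a)} = m(σ_a) for every object a of A), there exists a unique natural transformation ρ : w ⟹ w' such that ρ_{e(a)} = σ_a for every object a of A and m(ρ_x) = τ_x for every object x of X. -/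
open CategoryTheory

universe v₁ v₂ v₃ v₄ u₁ u₂ u₃ u₄

/-- Let `e : A ⥤ X` be bijective on objects and `m : B ⥤ Y` fully faithful. Given
`v, v' : A ⥤ B` and `u, u' : X ⥤ Y` with `m ∘ v = u ∘ e` and `m ∘ v' = u' ∘ e`, lifts
`w, w' : X ⥤ B` with `w ∘ e = v`, `m ∘ w = u`, `w' ∘ e = v'`, `m ∘ w' = u'`, and natural
transformations `σ : v ⟹ v'`, `τ : u ⟹ u'` such that `τ_{e(a)} = m(σ_a)` for every object
`a` of `A`, there exists a unique natural transformation `ρ : w ⟹ w'` with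
`ρ_{e(a)} = σ_a` for every object `a` of `A` and `m(ρ_x) = τ_x` for every object `x` of
`X` (all componentwise equalities expressed via the canonical `eqToHom`s). -/
theorem unique_natTrans_lift_along_boFF
    {A : Type u₁} [Category.{v₁} A] {X : Type u₂} [Category.{v₂} X]
    {B : Type u₃} [Category.{v₃} B] {Y : Type u₄} [Category.{v₄} Y]
    (e : A ⥤ X) (m : B ⥤ Y)
    (he : Function.Bijective e.obj)
    (hm : ∀ a b : B, Function.Bijective (fun f : a ⟶ b => m.map f))
    (v v' : A ⥤ B) (u u' : X ⥤ Y)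
    (hv : v ⋙ m = e ⋙ u) (hv' : v' ⋙ m = e ⋙ u')
    (w w' : X ⥤ B)
    (hwe : e ⋙ w = v) (hwm : w ⋙ m = u) (hwe' : e ⋙ w' = v') (hwm' : w' ⋙ m = u')
    (σ : v ⟶ v') (τ : u ⟶ u')
    (hcompat : ∀ a : A, τ.app (e.obj a) =
      eqToHom (Functor.congr_obj hv a).symm ≫ m.map (σ.app a) ≫
        eqToHom (Functor.congr_obj hv' a)) :
    ∃! ρ : w ⟶ w',
      (∀ a : A, ρ.app (e.obj a) =
        eqToHom (Functor.congr_obj hwe a) ≫ σ.app a ≫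
          eqToHom (Functor.congr_obj hwe' a).symm) ∧
      (∀ x : X, m.map (ρ.app x) =
        eqToHom (Functor.congr_obj hwm x) ≫ τ.app x ≫
          eqToHom (Functor.congr_obj hwm' x).symm) := by
  choose lift hlift using fun x : X => (hm (w.obj x) (w'.obj x)).2
    (eqToHom (Functor.congr_obj hwm x) ≫ τ.app x ≫ eqToHom (Functor.congr_obj hwm' x).symm)
  simp only at hlift
  refine ⟨⟨lift, ?_⟩, ⟨?_, ?_⟩, ?_⟩
  · intro x y f
    apply (hm _ _).1
    simp only [Functor.map_comp, hlift]
    rw [← Functor.comp_map w m, ← Functor.comp_map w' m,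
      Functor.congr_hom hwm f, Functor.congr_hom hwm' f]
    simp [τ.naturality f]
  · intro a
    apply (hm _ _).1
    simp only [hlift, Functor.map_comp, eqToHom_map, hcompat a]
    simp
  · intro x
    exact hlift x
  · intro ρ' ⟨h1, h2⟩
    ext x
    apply (hm _ _).1
    simp only [h2 x, hlift]
end

section
/- Suppose V has finite limits and all small coproducts and is strongly concrete. Then the functor bV : Set → V preserves equalizers: for every equalizer diagram E → S ⇉ T in Set, the image diagram bV E → bV S ⇉ bV T is an equalizer diagram in V. -/
open CategoryTheory CategoryTheory.Limits

universe v u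

variable (V : Type u) [Category.{v} V]

/-- The functor `bV : Set → V` sending a set `S` to the coproduct of copies of the terminal
object `∗` of `V` indexed by `S`. -/
noncomputable def bV [HasTerminal V] [HasCoproducts.{v} V] : Type v ⥤ V where
  obj S := ∐ fun (_ : S) => ⊤_ V
  map {S T} f := Sigma.desc fun s => Sigma.ι (fun (_ : T) => ⊤_ V) (f s)
  map_id S := by ext s; simp
  map_comp f g := by ext s; simp

/-- `V` is strongly concrete if there is an underlying-set functor `S : V → Set` such that
(i) the identity functor of `Set` is naturally isomorphic to `S ∘ bV`, (ii) `S` is faithful,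
and (iii) `S X` is empty if and only if `X` is an initial object of `V`. -/
structure StronglyConcrete [HasTerminal V] [HasCoproducts.{v} V] where
  S : V ⥤ Type v
  unitIso : 𝟭 (Type v) ≅ bV V ⋙ S
  faithful : S.Faithful
  empty_iff_initial : ∀ X : V, IsEmpty (S.obj X) ↔ Nonempty (IsInitial X)

/-- Suppose `V` has finite limits and all small coproducts and is strongly concrete. Then
`bV : Set → V` preserves equalizers: it preserves all limits of parallel pairs, so the image
of every equalizer diagram `E → S ⇉ T` in `Set` is an equalizer diagram in `V`. -/
theorem bV_preservesEqualizers
    [HasFiniteLimits V] [HasCoproducts.{v} V]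
    (sc : StronglyConcrete V) :
    PreservesLimitsOfShape WalkingParallelPair (bV V) := by
  haveI := sc.faithful
  have key : ∀ {A B : Type v} (f g : A ⟶ B), PreservesLimit (parallelPair f g) (bV V) := by
    intro A B f g
    classical
    apply preservesLimit_of_preserves_limit_cone (Types.equalizerLimit (g := f) (h := g)).isLimit
    show IsLimit ((bV V).mapCone
      (Fork.ofι (TypeCat.ofHom (Subtype.val : { x : A // f x = g x } → A)) (by ext x; exact x.prop)))
    refine (isLimitMapConeForkEquiv (bV V) (f := f) (g := g)
      (h := (TypeCat.ofHom (Subtype.val : { x : A // f x = g x } → A))) (by ext x; exact x.prop)).symm ?_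
    apply Fork.IsLimit.mk'
    intro s
    -- every "element" of the cone point lands in the set-theoretic equalizer
    have hel : ∀ x : sc.S.obj s.pt,
        f (sc.unitIso.inv.app A (sc.S.map s.ι x)) =
          g (sc.unitIso.inv.app A (sc.S.map s.ι x)) := by
      intro x
      have hc : sc.S.map ((bV V).map f) (sc.S.map s.ι x) =
          sc.S.map ((bV V).map g) (sc.S.map s.ι x) := by
        have := congrArg (fun p => sc.S.map p x) s.condition
        simpa [Functor.map_comp] using this
      have hf := ConcreteCategory.congr_hom (sc.unitIso.inv.naturality f) (sc.S.map s.ι x)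
      have hg := ConcreteCategory.congr_hom (sc.unitIso.inv.naturality g) (sc.S.map s.ι x)
      simp only [Functor.comp_map, Functor.id_map, types_comp_apply] at hf hg
      rw [← hf, ← hg, hc]
    by_cases hE : IsEmpty { x : A // f x = g x }
    · -- equalizer set empty: the cone point is initial
      have hX : IsEmpty (sc.S.obj s.pt) := ⟨fun x => hE.false ⟨_, hel x⟩⟩
      have hI : IsInitial s.pt := Classical.choice ((sc.empty_iff_initial s.pt).mp hX)
      exact ⟨hI.to _, hI.hom_ext _ _, fun {m} _ => hI.hom_ext _ _⟩
    · -- equalizer set nonempty: the inclusion is a split mono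
      have hne : Nonempty { x : A // f x = g x } := not_isEmpty_iff.mp hE
      let ρ : A → { x : A // f x = g x } := fun a =>
        if h : f a = g a then ⟨a, h⟩ else Classical.arbitrary _
      have hretr : (TypeCat.ofHom (Subtype.val : { x : A // f x = g x } → A)) ≫ TypeCat.ofHom ρ =
          𝟙 { x : A // f x = g x } := by ext e; exact congrArg Subtype.val (dif_pos e.2 : ρ e.1 = e)
      have hr : (bV V).map (TypeCat.ofHom (Subtype.val : { x : A // f x = g x } → A)) ≫ (bV V).map (TypeCat.ofHom ρ) =
          𝟙 ((bV V).obj { x : A // f x = g x }) := by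
        rw [← Functor.map_comp, hretr, CategoryTheory.Functor.map_id]
      refine ⟨s.ι ≫ (bV V).map (TypeCat.ofHom ρ), ?_, ?_⟩
      · -- the factorisation equation, checked after applying the faithful functor S
        show (s.ι ≫ (bV V).map (TypeCat.ofHom ρ)) ≫
          (bV V).map (TypeCat.ofHom (Subtype.val : { x : A // f x = g x } → A)) = s.ι
        apply sc.S.map_injective
        rw [Category.assoc, ← Functor.map_comp]
        ext x
        simp only [TypeCat.Fun.toFun_apply, FunctorToTypes.map_comp_apply]
        set y := sc.S.map s.ι x with hy
        set a := sc.unitIso.inv.app A y with ha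
        have hyy : sc.unitIso.hom.app A a = y :=
          ConcreteCategory.congr_hom (sc.unitIso.inv_hom_id_app A) y
        let t : A ⟶ A := TypeCat.ofHom ρ ≫ (TypeCat.ofHom (Subtype.val : { x : A // f x = g x } → A))
        have h1 := NatTrans.naturality_apply sc.unitIso.hom t a
        have hta : t a = a := by
          show ((ρ a : { x : A // f x = g x }) : A) = a
          rw [show ρ a = ⟨a, hel x⟩ from dif_pos (hel x)]
        simp only [Functor.id_map, Functor.comp_map] at h1
        rw [hta] at h1
        calc sc.S.map ((bV V).map t) y
            = sc.S.map ((bV V).map t) (sc.unitIso.hom.app A a) := by rw [hyy]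
          _ = sc.unitIso.hom.app A a := h1.symm
          _ = y := hyy
      · intro m hm
        have huniq : ∀ n : s.pt ⟶ (bV V).obj { x : A // f x = g x },
            n ≫ (bV V).map (TypeCat.ofHom (Subtype.val : { x : A // f x = g x } → A)) = s.ι →
            n = s.ι ≫ (bV V).map (TypeCat.ofHom ρ) := by
          intro n hn
          rw [← Category.comp_id n, ← hr, ← Category.assoc, hn]
        exact huniq m hm
  constructor
  intro K
  exact preservesLimit_of_iso_diagram (bV V) (diagramIsoParallelPair K).symm
end
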